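/- Let G be a π-separable group with O_{π'}(G) = 1. If a π-element g of G induces a class-preserving automorphism of N := O_{ππ'}(G), then g ∈ N. -/

import Mathlib

open scoped Classical

/-- A natural number is a `π`-number if all of its prime divisors lie in `π`. -/
def Nat.IsPiNumber (π : Set ℕ) (n : ℕ) : Prop := ∀ p : ℕ, p.Prime → p ∣ n → p ∈ π

/-- The `π`-part of a natural number: the largest divisor all of whose prime factors lie in `π`. -/
noncomputable def Nat.piPart (π : Set ℕ) (n : ℕ) : ℕ :=
  n.factorization.prod fun p k => if p ∈ π then p ^ k else 1

/-- `O_π(G)`: the subgroup generated by all normal `π`-subgroups of `G`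
(for finite `G` this is the largest normal `π`-subgroup). -/
def Opi (π : Set ℕ) (G : Type*) [Group G] : Subgroup G :=
  Subgroup.normalClosure
    (⋃ N ∈ {N : Subgroup G | N.Normal ∧ Nat.IsPiNumber π (Nat.card N)}, (N : Set G))

instance Opi.normal (π : Set ℕ) (G : Type*) [Group G] : (Opi π G).Normal :=
  Subgroup.normalClosure_normal

/-- `O_{ππ'}(G)`: the preimage in `G` of `O_{π'}(G / O_π(G))`. -/
def Opipi' (π : Set ℕ) (G : Type*) [Group G] : Subgroup G :=
  (Opi πᶜ (G ⧸ Opi π G)).comap (QuotientGroup.mk' (Opi π G))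

/-- A group is `π`-separable if it has a normal series each of whose factors is a
`π`-group or a `π'`-group. -/
def IsPiSeparable (π : Set ℕ) (G : Type*) [Group G] : Prop :=
  ∃ (n : ℕ) (H : Fin (n + 1) → Subgroup G), Monotone H ∧ H 0 = ⊥ ∧ H (Fin.last n) = ⊤ ∧
    (∀ i, (H i).Normal) ∧
    ∀ i : Fin n, Nat.IsPiNumber π ((H i.castSucc).relIndex (H i.succ)) ∨
      Nat.IsPiNumber πᶜ ((H i.castSucc).relIndex (H i.succ))

section Arith
variable {π : Set ℕ}

lemma isPiNumber_one : Nat.IsPiNumber π 1 :=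
  fun p hp hdvd => absurd (Nat.dvd_one.mp hdvd) hp.ne_one

lemma isPiNumber_of_dvd {m n : ℕ} (h : m ∣ n) (hn : Nat.IsPiNumber π n) : Nat.IsPiNumber π m :=
  fun p hp hd => hn p hp (hd.trans h)

lemma isPiNumber_mul {m n : ℕ} (hm : Nat.IsPiNumber π m) (hn : Nat.IsPiNumber π n) :
    Nat.IsPiNumber π (m * n) :=
  fun p hp hd => ((Nat.Prime.dvd_mul hp).mp hd).elim (hm p hp) (hn p hp)

lemma isPiNumber_coprime {m n : ℕ} (hm : Nat.IsPiNumber π m) (hn : Nat.IsPiNumber πᶜ n) :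
    Nat.Coprime m n := by
  by_contra hne
  rcases Nat.exists_prime_and_dvd hne with ⟨p, hp, hpd⟩
  exact hn p hp (hpd.trans (Nat.gcd_dvd_right m n)) (hm p hp (hpd.trans (Nat.gcd_dvd_left m n)))

end Arith

section OpiLemmas
variable {π : Set ℕ} {G : Type*} [Group G]

lemma le_Opi {N : Subgroup G} (hN : N.Normal) (hcard : Nat.IsPiNumber π (Nat.card N)) :
    N ≤ Opi π G := fun x hx =>
  Subgroup.subset_normalClosure (Set.mem_iUnion₂.mpr ⟨N, ⟨hN, hcard⟩, hx⟩)

lemma card_sup_dvd [Finite G] (A B : Subgroup G) [hB : B.Normal] :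
    Nat.card (A ⊔ B : Subgroup G) ∣ Nat.card A * Nat.card B := by
  have h1 : Nat.card (A ⊔ B : Subgroup G) =
      Nat.card ((A ⊔ B : Subgroup G) ⧸ B.subgroupOf (A ⊔ B)) * Nat.card (B.subgroupOf (A ⊔ B)) :=
    Subgroup.card_eq_card_quotient_mul_card_subgroup _
  have h2 : Nat.card ((A ⊔ B : Subgroup G) ⧸ B.subgroupOf (A ⊔ B)) =
      Nat.card (A ⧸ B.subgroupOf A) :=
    (Nat.card_congr (QuotientGroup.quotientInfEquivProdNormalQuotient A B).toEquiv).symm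
  have h3 : Nat.card (B.subgroupOf (A ⊔ B)) = Nat.card B :=
    Nat.card_congr (Subgroup.subgroupOfEquivOfLe le_sup_right).toEquiv
  have h4 : Nat.card (A ⧸ B.subgroupOf A) ∣ Nat.card A := by
    exact Dvd.intro _ (Subgroup.card_eq_card_quotient_mul_card_subgroup (B.subgroupOf A)).symm
  calc Nat.card (A ⊔ B : Subgroup G) = Nat.card (A ⧸ B.subgroupOf A) * Nat.card B := by
        rw [h1, h2, h3]
    _ ∣ Nat.card A * Nat.card B := mul_dvd_mul_right h4 _

end OpiLemmas

section OpiCard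
variable {π : Set ℕ} {G : Type*} [Group G] [Finite G]

lemma Opi_isPiNumber : Nat.IsPiNumber π (Nat.card (Opi π G)) := by
  haveI : Finite (Subgroup G) :=
    Finite.of_injective (fun H : Subgroup G => (H : Set G)) SetLike.coe_injective
  set S : Set (Subgroup G) := {N : Subgroup G | N.Normal ∧ Nat.IsPiNumber π (Nat.card N)} with hS
  have hbot : (⊥ : Subgroup G) ∈ S := by
    constructor
    · infer_instance
    · simpa using (isPiNumber_one (π := π))
  obtain ⟨M, hMS, hMmax⟩ := Set.Finite.exists_maximalFor (fun N : Subgroup G => Nat.card N) S (Set.toFinite S) ⟨⊥, hbot⟩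
  have hle : ∀ N ∈ S, N ≤ M := by
    intro N hN
    haveI := hMS.1
    haveI := hN.1
    have hsup : (N ⊔ M : Subgroup G) ∈ S := by
      refine ⟨Subgroup.sup_normal N M, ?_⟩
      exact isPiNumber_of_dvd (card_sup_dvd N M) (isPiNumber_mul hN.2 hMS.2)
    have h1 : Nat.card M ≤ Nat.card (N ⊔ M : Subgroup G) := Subgroup.card_le_of_le le_sup_right
    have h2 := hMmax hsup h1
    have : M = N ⊔ M := Subgroup.eq_of_le_of_card_ge le_sup_right h2
    exact le_trans le_sup_left this.symm.le
  have hOle : Opi π G ≤ M := by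
    haveI := hMS.1
    apply Subgroup.normalClosure_le_normal
    intro x hx
    rcases Set.mem_iUnion₂.mp hx with ⟨N, hN, hxN⟩
    exact hle N hN hxN
  have : Opi π G = M := le_antisymm hOle (le_Opi hMS.1 hMS.2)
  rw [this]; exact hMS.2

lemma normal_isPiNumber_le_Opi {N : Subgroup G} (hN : N.Normal)
    (h : Nat.IsPiNumber π (Nat.card N)) : N ≤ Opi π G := le_Opi hN h

end OpiCard

section OpiQuot
variable (π : Set ℕ) {G : Type*} [Group G] [Finite G]

lemma card_comap_mk'_eq (N' : Subgroup (G ⧸ Opi π G)) :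
    Nat.card (N'.comap (QuotientGroup.mk' (Opi π G))) = Nat.card N' * Nat.card (Opi π G) := by
  set Q := N'.comap (QuotientGroup.mk' (Opi π G)) with hQ
  have hker : Opi π G ≤ Q := by
    intro x hx
    simp only [hQ, Subgroup.mem_comap]
    have : QuotientGroup.mk' (Opi π G) x = 1 := (QuotientGroup.eq_one_iff x).mpr hx
    rw [this]; exact N'.one_mem
  set φ := (QuotientGroup.mk' (Opi π G)).comp Q.subtype with hφ
  have hrange : φ.range = N' := by
    rw [hφ, MonoidHom.range_comp, Q.range_subtype]
    exact Subgroup.map_comap_eq_self_of_surjective (QuotientGroup.mk'_surjective _) N'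
  have hkerφ : φ.ker = (Opi π G).subgroupOf Q := by
    rw [hφ, ← MonoidHom.comap_ker, QuotientGroup.ker_mk']
    rfl
  have h1 : Nat.card Q = Nat.card (Q ⧸ φ.ker) * Nat.card φ.ker :=
    Subgroup.card_eq_card_quotient_mul_card_subgroup _
  have h2 : Nat.card (Q ⧸ φ.ker) = Nat.card N' := by
    rw [← hrange]
    exact Nat.card_congr (QuotientGroup.quotientKerEquivRange φ).toEquiv
  have h3 : Nat.card φ.ker = Nat.card (Opi π G) := by
    rw [hkerφ]
    exact Nat.card_congr (Subgroup.subgroupOfEquivOfLe hker).toEquiv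
  rw [h1, h2, h3]

lemma Opi_quotient_bot : Opi π (G ⧸ Opi π G) = ⊥ := by
  have key : ∀ N' : Subgroup (G ⧸ Opi π G), N'.Normal →
      Nat.IsPiNumber π (Nat.card N') → N' = ⊥ := by
    intro N' hN' hcard
    set Q := N'.comap (QuotientGroup.mk' (Opi π G)) with hQdef
    haveI : Q.Normal := hN'.comap _
    have hQcard : Nat.IsPiNumber π (Nat.card Q) := by
      rw [card_comap_mk'_eq]
      exact isPiNumber_mul hcard Opi_isPiNumber
    have hQle : Q ≤ Opi π G := le_Opi ‹Q.Normal› hQcard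
    have : N' = Subgroup.map (QuotientGroup.mk' (Opi π G)) Q :=
      (Subgroup.map_comap_eq_self_of_surjective (QuotientGroup.mk'_surjective _) N').symm
    rw [this, eq_bot_iff]
    rintro y ⟨x, hx, rfl⟩
    simpa using (QuotientGroup.eq_one_iff x).mpr (hQle hx)
  rw [eq_bot_iff]
  apply Subgroup.normalClosure_le_normal
  intro x hx
  rcases Set.mem_iUnion₂.mp hx with ⟨N', hN', hxN⟩
  rw [key N' hN'.1 hN'.2] at hxN
  exact hxN

end OpiQuot

section Quot
variable {π : Set ℕ} {G G' : Type*} [Group G] [Group G']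

lemma relindex_map_dvd {f : G →* G'} {Hc Hs : Subgroup G} (hle : Hc ≤ Hs) :
    ((Hc.map f).relIndex (Hs.map f)) ∣ Hc.relIndex Hs := by
  have claim : (Hc.map f).subgroupOf (Hs.map f) = (Hc.subgroupOf Hs).map (f.subgroupMap Hs) := by
    ext ⟨y, hy⟩
    simp only [Subgroup.mem_subgroupOf, Subgroup.mem_map]
    constructor
    · rintro ⟨x, hx, rfl⟩
      exact ⟨⟨x, hle hx⟩, hx, rfl⟩
    · rintro ⟨⟨x, hxs⟩, hx, hfx⟩
      refine ⟨x, hx, ?_⟩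
      exact congrArg Subtype.val hfx
  rw [Subgroup.relIndex, Subgroup.relIndex, claim]
  exact (Hc.subgroupOf Hs).index_map_dvd (f.subgroupMap_surjective Hs)

lemma isPiSeparable_quotient (K : Subgroup G) [K.Normal] (h : IsPiSeparable π G) :
    IsPiSeparable π (G ⧸ K) := by
  obtain ⟨n, H, hmono, h0, htop, hnorm, hfac⟩ := h
  refine ⟨n, fun i => (H i).map (QuotientGroup.mk' K), fun i j hij => Subgroup.map_mono (hmono hij),
    ?_, ?_, ?_, ?_⟩
  · show (H 0).map (QuotientGroup.mk' K) = ⊥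
    rw [h0]; exact Subgroup.map_bot _
  · show (H (Fin.last n)).map (QuotientGroup.mk' K) = ⊤
    rw [htop]; exact Subgroup.map_top_of_surjective _ (QuotientGroup.mk'_surjective K)
  · intro i
    exact (hnorm i).map _ (QuotientGroup.mk'_surjective K)
  · intro i
    have hd := relindex_map_dvd (f := QuotientGroup.mk' K) (hmono (Fin.castSucc_lt_succ (i := i)).le)
    rcases hfac i with hc | hc
    · exact Or.inl (isPiNumber_of_dvd hd hc)
    · exact Or.inr (isPiNumber_of_dvd hd hc)

end Quot

section Cover
variable {M : Type*} [Group M] [Finite M]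

lemma eq_top_of_conj_cover (K : Subgroup M) (hc : ∀ x : M, ∃ f : M, f * x * f⁻¹ ∈ K) :
    K = ⊤ := by
  classical
  haveI : Fintype M := Fintype.ofFinite M
  haveI : Fintype (M ⧸ K) := Fintype.ofFinite _
  set F : (M ⧸ K) → Finset M :=
    fun q => Finset.image (fun k : K => Quotient.out q * (k : M) * (Quotient.out q)⁻¹)
      Finset.univ with hF
  have hinj : ∀ q : M ⧸ K,
      Function.Injective (fun k : K => Quotient.out q * (k : M) * (Quotient.out q)⁻¹) := by
    intro q a b hab
    simp only [] at hab
    exact Subtype.ext (mul_left_cancel (mul_right_cancel hab))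
  have hcard : ∀ q, (F q).card = Nat.card K := by
    intro q
    rw [hF, Finset.card_image_of_injective _ (hinj q), Finset.card_univ,
      Nat.card_eq_fintype_card]
  have hone : ∀ q, (1 : M) ∈ F q := by
    intro q
    rw [hF]
    exact Finset.mem_image.mpr ⟨1, Finset.mem_univ _, by simp⟩
  have hcover : ∀ x : M, ∃ q, x ∈ F q := by
    intro x
    obtain ⟨f, hf⟩ := hc x
    refine ⟨QuotientGroup.mk f⁻¹, ?_⟩
    set q : M ⧸ K := QuotientGroup.mk f⁻¹ with hq
    have hout : (QuotientGroup.mk (Quotient.out q) : M ⧸ K) = QuotientGroup.mk f⁻¹ := by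
      rw [← hq]; exact Quotient.out_eq q
    have hk0 : f * Quotient.out q ∈ K := by
      have := (QuotientGroup.eq (s := K)).mp hout.symm
      simpa using this
    have hmem : (Quotient.out q)⁻¹ * x * Quotient.out q ∈ K := by
      have : (Quotient.out q)⁻¹ * x * Quotient.out q =
          (f * Quotient.out q)⁻¹ * (f * x * f⁻¹) * (f * Quotient.out q) := by group
      rw [this]
      exact K.mul_mem (K.mul_mem (K.inv_mem hk0) hf) hk0
    rw [hF]
    refine Finset.mem_image.mpr ⟨⟨_, hmem⟩, Finset.mem_univ _, ?_⟩
    group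
  have hsub : Finset.univ.erase (1 : M) ⊆
      Finset.univ.biUnion (fun q : M ⧸ K => (F q).erase 1) := by
    intro x hx
    obtain ⟨q, hq⟩ := hcover x
    exact Finset.mem_biUnion.mpr ⟨q, Finset.mem_univ _,
      Finset.mem_erase.mpr ⟨(Finset.mem_erase.mp hx).1, hq⟩⟩
  have hcount : Fintype.card M - 1 ≤ Fintype.card (M ⧸ K) * (Nat.card K - 1) := by
    calc Fintype.card M - 1 = (Finset.univ.erase (1 : M)).card := by
          rw [Finset.card_erase_of_mem (Finset.mem_univ _), Finset.card_univ]
      _ ≤ (Finset.univ.biUnion (fun q : M ⧸ K => (F q).erase 1)).card := Finset.card_le_card hsub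
      _ ≤ ∑ q : M ⧸ K, ((F q).erase 1).card := Finset.card_biUnion_le
      _ = ∑ q : M ⧸ K, (Nat.card K - 1) := by
          refine Finset.sum_congr rfl fun q _ => ?_
          rw [Finset.card_erase_of_mem (hone q), hcard q]
      _ = Fintype.card (M ⧸ K) * (Nat.card K - 1) := by
          rw [Finset.sum_const, Finset.card_univ, smul_eq_mul]
  have hm : Nat.card M = Nat.card (M ⧸ K) * Nat.card K :=
    Subgroup.card_eq_card_quotient_mul_card_subgroup K
  have hk1 : 1 ≤ Nat.card K := Nat.one_le_iff_ne_zero.mpr Nat.card_pos.ne'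
  have hq1 : 1 ≤ Nat.card (M ⧸ K) := Nat.one_le_iff_ne_zero.mpr Nat.card_pos.ne'
  have key : Nat.card (M ⧸ K) = 1 := by
    have h2 : Nat.card (M ⧸ K) * (Nat.card K - 1) =
        Nat.card (M ⧸ K) * Nat.card K - Nat.card (M ⧸ K) := by
      rw [Nat.mul_sub, Nat.mul_one]
    rw [Nat.card_eq_fintype_card (α := M), Nat.card_eq_fintype_card (α := M ⧸ K)] at hm
    rw [Nat.card_eq_fintype_card (α := M ⧸ K)] at h2 ⊢
    rw [h2, ← hm] at hcount
    have hmq : Fintype.card (M ⧸ K) ≤ Fintype.card M := by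
      rw [hm]; exact Nat.le_mul_of_pos_right _ (by omega)
    have hm1 : 1 ≤ Fintype.card M := Fintype.card_pos
    have hq1' : 1 ≤ Fintype.card (M ⧸ K) := Fintype.card_pos
    omega
  have : K.index = 1 := by rw [Subgroup.index_eq_card, key]
  exact Subgroup.index_eq_one.mp this

end Cover

section GcdPow
variable {Γ : Type*} [Group Γ]

lemma pow_gcd_mem (C : Subgroup Γ) (x : Γ) {a b : ℕ} (ha : x ^ a ∈ C) (hb : x ^ b ∈ C) :
    x ^ (Nat.gcd a b) ∈ C := by
  have h := Nat.gcd_eq_gcd_ab a b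
  have hx : (x ^ (Nat.gcd a b) : Γ) =
      (x ^ a) ^ (Nat.gcdA a b) * (x ^ b) ^ (Nat.gcdB a b) := by
    rw [← zpow_natCast x (Nat.gcd a b), h, zpow_add, zpow_mul, zpow_mul,
      zpow_natCast, zpow_natCast]
  rw [hx]
  exact C.mul_mem (C.zpow_mem ha _) (C.zpow_mem hb _)

lemma mem_of_primePow_pow_mem [Finite Γ] (C : Subgroup Γ) (x : Γ)
    (h : ∀ p : ℕ, p.Prime → p ∣ orderOf x →
      x ^ (orderOf x / p ^ (orderOf x).factorization p) ∈ C) :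
    x ∈ C := by
  set n := orderOf x with hn
  have hn0 : n ≠ 0 := (orderOf_pos x).ne'
  by_cases hn1 : n = 1
  · have : x = 1 := orderOf_eq_one_iff.mp hn1
    rw [this]; exact C.one_mem
  have main : ∀ s : Finset ℕ, s ⊆ n.primeFactors →
      x ^ (s.gcd fun p => n / p ^ n.factorization p) ∈ C := by
    intro s
    induction s using Finset.induction with
    | empty => intro _; simpa using C.one_mem
    | @insert a s' ha ih =>
      intro hs
      rw [Finset.gcd_insert]
      have hamem := hs (Finset.mem_insert_self a s')
      exact pow_gcd_mem C x
        (h a (Nat.prime_of_mem_primeFactors hamem) (Nat.dvd_of_mem_primeFactors hamem))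
        (ih (fun b hb => hs (Finset.mem_insert_of_mem hb)))
  have hmain := main n.primeFactors (subset_refl _)
  have hg : (n.primeFactors.gcd fun p => n / p ^ n.factorization p) = 1 := by
    set g := n.primeFactors.gcd fun p => n / p ^ n.factorization p with hgdef
    obtain ⟨p₀, hp₀⟩ := ((Nat.nonempty_primeFactors (n := n)).mpr (by omega)).exists_mem
    by_contra hg1
    have hgne0 : g ≠ 0 := by
      intro h0
      have := Finset.gcd_eq_zero_iff.mp h0 p₀ hp₀
      exact absurd this (Nat.ordCompl_pos p₀ hn0).ne'
    set q := g.minFac with hqdef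
    have hq : q.Prime := Nat.minFac_prime hg1
    have hqg : q ∣ g := Nat.minFac_dvd g
    have hqn : q ∣ n := by
      have h1 : g ∣ n / p₀ ^ n.factorization p₀ := Finset.gcd_dvd hp₀
      exact (hqg.trans h1).trans (Nat.ordCompl_dvd n p₀)
    have hqmem : q ∈ n.primeFactors := Nat.mem_primeFactors.mpr ⟨hq, hqn, hn0⟩
    have : q ∣ n / q ^ n.factorization q := hqg.trans (Finset.gcd_dvd hqmem)
    exact Nat.not_dvd_ordCompl hq hn0 this
  rw [hg, pow_one] at hmain
  exact hmain

end GcdPow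

section ClassPreserving
variable {Γ : Type*} [Group Γ] [Finite Γ]

lemma centralizes_of_primePow_classPreserving (F : Subgroup Γ) (hFn : F.Normal)
    {p : ℕ} (hp : p.Prime) {k : ℕ} (h : Γ) (hord : orderOf h = p ^ k)
    (hndvd : ¬ p ∣ Nat.card F)
    (hclass : ∀ x ∈ F, ∃ f ∈ F, h * x * h⁻¹ = f * x * f⁻¹) :
    ∀ x ∈ F, h * x = x * h := by
  haveI : Fact p.Prime := ⟨hp⟩
  haveI : Finite (ConjAct Γ) := Finite.of_equiv Γ ConjAct.toConjAct.toEquiv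
  -- Step A: for each x ∈ F there is an F-conjugate of x centralizing h
  have stepA : ∀ x ∈ F, ∃ f ∈ F, h * (f * x * f⁻¹) = (f * x * f⁻¹) * h := by
    intro x hx
    set FC : Subgroup (ConjAct Γ) := F.map ConjAct.toConjAct.toMonoidHom with hFC
    set X : Set Γ := MulAction.orbit FC x with hX
    have hXmem : ∀ y : Γ, y ∈ X ↔ ∃ f ∈ F, f * x * f⁻¹ = y := by
      intro y
      constructor
      · rintro ⟨⟨u, hu⟩, rfl⟩
        rcases Subgroup.mem_map.mp hu with ⟨f, hf, rfl⟩
        exact ⟨f, hf, by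
          simp [ConjAct.smul_def, Subgroup.smul_def]⟩
      · rintro ⟨f, hf, rfl⟩
        refine ⟨⟨ConjAct.toConjAct f, Subgroup.mem_map.mpr ⟨f, hf, rfl⟩⟩, ?_⟩
        simp [ConjAct.smul_def, Subgroup.smul_def]
    -- invariance of X under powers of h
    have hstep : ∀ y ∈ X, h * y * h⁻¹ ∈ X := by
      intro y hy
      rcases (hXmem y).mp hy with ⟨f, hf, rfl⟩
      rcases hclass x hx with ⟨f₀, hf₀, e2⟩
      refine (hXmem _).mpr ⟨(h * f * h⁻¹) * f₀, F.mul_mem (hFn.conj_mem f hf h) hf₀, ?_⟩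
      calc ((h * f * h⁻¹) * f₀) * x * ((h * f * h⁻¹) * f₀)⁻¹
          = (h * f * h⁻¹) * (f₀ * x * f₀⁻¹) * (h * f * h⁻¹)⁻¹ := by group
        _ = (h * f * h⁻¹) * (h * x * h⁻¹) * (h * f * h⁻¹)⁻¹ := by rw [← e2]
        _ = h * (f * x * f⁻¹) * h⁻¹ := by group
    have hstepm : ∀ (m : ℕ), ∀ y ∈ X, h ^ m * y * (h ^ m)⁻¹ ∈ X := by
      intro m
      induction m with
      | zero => intro y hy; simpa using hy
      | succ m ih =>
        intro y hy
        have : h ^ (m + 1) * y * (h ^ (m + 1))⁻¹ = h * (h ^ m * y * (h ^ m)⁻¹) * h⁻¹ := by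
          rw [pow_succ']; group
        rw [this]
        exact hstep _ (ih y hy)
    set H' : Subgroup (ConjAct Γ) := Subgroup.zpowers (ConjAct.toConjAct h) with hH'
    have hinv : ∀ (u : H') (y : Γ), y ∈ X → ConjAct.ofConjAct (u : ConjAct Γ) * y *
        (ConjAct.ofConjAct (u : ConjAct Γ))⁻¹ ∈ X := by
      rintro ⟨u, hu⟩ y hy
      rcases (mem_powers_iff_mem_zpowers.mpr hu) with ⟨m, hm⟩
      have hm' : ConjAct.toConjAct h ^ m = u := hm
      have huh : ConjAct.ofConjAct u = h ^ m := by
        rw [← hm', ← map_pow, ConjAct.ofConjAct_toConjAct]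
      rw [huh]
      exact hstepm m y hy
    letI actX : MulAction H' X :=
      { smul := fun u y => ⟨ConjAct.ofConjAct (u : ConjAct Γ) * (y : Γ) *
          (ConjAct.ofConjAct (u : ConjAct Γ))⁻¹, hinv u y y.2⟩
        one_smul := fun y => Subtype.ext (by
          show ConjAct.ofConjAct ((1 : H') : ConjAct Γ) * (y : Γ) *
            (ConjAct.ofConjAct ((1 : H') : ConjAct Γ))⁻¹ = (y : Γ)
          simp)
        mul_smul := fun u v y => Subtype.ext (by
          show ConjAct.ofConjAct ((u * v : H') : ConjAct Γ) * (y : Γ) *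
              (ConjAct.ofConjAct ((u * v : H') : ConjAct Γ))⁻¹ =
            ConjAct.ofConjAct ((u : ConjAct Γ)) * (ConjAct.ofConjAct ((v : ConjAct Γ)) * (y : Γ) *
              (ConjAct.ofConjAct ((v : ConjAct Γ)))⁻¹) * (ConjAct.ofConjAct ((u : ConjAct Γ)))⁻¹
          simp [map_mul, mul_assoc]) }
    have hsmul_def : ∀ (u : H') (y : X), (u • y : X) =
        ⟨ConjAct.ofConjAct (u : ConjAct Γ) * (y : Γ) *
          (ConjAct.ofConjAct (u : ConjAct Γ))⁻¹, hinv u y y.2⟩ := fun _ _ => rfl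
    have hPG : IsPGroup p H' := by
      apply IsPGroup.of_card
      rw [Nat.card_zpowers]
      have h5 : orderOf (ConjAct.toConjAct h) = orderOf h :=
        orderOf_injective ConjAct.toConjAct.toMonoidHom ConjAct.toConjAct.injective h
      rw [h5, hord]
    have hcardX : Nat.card X ∣ Nat.card F := by
      have h1 : Nat.card X = Nat.card (FC ⧸ MulAction.stabilizer FC x) :=
        Nat.card_congr (MulAction.orbitEquivQuotientStabilizer FC x)
      have h2 : Nat.card FC = Nat.card F :=
        (Nat.card_congr (Subgroup.equivMapOfInjective F ConjAct.toConjAct.toMonoidHom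
          ConjAct.toConjAct.injective).toEquiv).symm
      rw [h1, ← h2]
      exact Dvd.intro _ (Subgroup.card_eq_card_quotient_mul_card_subgroup _).symm
    have hnd : ¬ p ∣ Nat.card X := fun hd => hndvd (hd.trans hcardX)
    obtain ⟨⟨y, hyX⟩, hyfix⟩ := hPG.nonempty_fixed_point_of_prime_not_dvd_card X hnd
    have hfix := hyfix ⟨ConjAct.toConjAct h, Subgroup.mem_zpowers _⟩
    rw [hsmul_def] at hfix
    have hyc : h * y * h⁻¹ = y := by
      have := congrArg Subtype.val hfix
      simpa using this
    rcases (hXmem y).mp hyX with ⟨f, hf, rfl⟩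
    exact ⟨f, hf, mul_inv_eq_iff_eq_mul.mp hyc⟩
  -- Step B: covering argument inside F
  have hKtop : (Subgroup.centralizer {h}).subgroupOf F = ⊤ := by
    apply eq_top_of_conj_cover
    rintro ⟨x, hx⟩
    rcases stepA x hx with ⟨f, hf, hcomm⟩
    refine ⟨⟨f, hf⟩, ?_⟩
    rw [Subgroup.mem_subgroupOf]
    show (⟨f, hf⟩ * ⟨x, hx⟩ * (⟨f, hf⟩ : F)⁻¹ : F).val ∈ Subgroup.centralizer {h}
    have hval : ((⟨f, hf⟩ * ⟨x, hx⟩ * (⟨f, hf⟩ : F)⁻¹ : F) : Γ) = f * x * f⁻¹ := rfl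
    rw [hval, Subgroup.mem_centralizer_iff]
    rintro g rfl
    exact hcomm
  intro x hx
  have : (⟨x, hx⟩ : F) ∈ (Subgroup.centralizer {h}).subgroupOf F := by
    rw [hKtop]; trivial
  rw [Subgroup.mem_subgroupOf] at this
  exact (Subgroup.mem_centralizer_iff.mp this h rfl)

end ClassPreserving

section HallHigman
variable {π : Set ℕ} {G : Type*} [Group G] [Finite G]

lemma HallHigman (hsep : IsPiSeparable π G) (hbot : Opi π G = ⊥) :
    Subgroup.centralizer ((Opi πᶜ G : Subgroup G) : Set G) ≤ Opi πᶜ G := by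
  set F := Opi πᶜ G with hFdef
  set C := Subgroup.centralizer ((F : Subgroup G) : Set G) with hCdef
  haveI hFnormal : F.Normal := Opi.normal πᶜ G
  haveI hCnormal : C.Normal := by
    constructor
    intro c hc g
    rw [hCdef, Subgroup.mem_centralizer_iff] at hc ⊢
    intro y hy
    have hy' : g⁻¹ * y * g ∈ F := by
      have := hFnormal.conj_mem y hy g⁻¹
      simpa using this
    have hcy := hc _ hy'
    calc y * (g * c * g⁻¹) = g * ((g⁻¹ * y * g) * c) * g⁻¹ := by group
      _ = g * (c * (g⁻¹ * y * g)) * g⁻¹ := by rw [hcy]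
      _ = (g * c * g⁻¹) * y := by group
  set Z := C ⊓ F with hZdef
  haveI hZnormal : Z.Normal := Subgroup.normal_inf_normal C F
  have hZC : Z ≤ C := inf_le_left
  have hZF : Z ≤ F := inf_le_right
  have hZcentral : ∀ z ∈ Z, ∀ c ∈ C, z * c = c * z := by
    intro z hz c hc
    exact (Subgroup.mem_centralizer_iff.mp hc) z (hZF hz)
  have hcardZ : Nat.IsPiNumber πᶜ (Nat.card Z) :=
    isPiNumber_of_dvd (Subgroup.card_dvd_of_le hZF) Opi_isPiNumber
  obtain ⟨n, H, hmono, h0, htop, hnorm, hfac⟩ := hsep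
  have key : ∀ i : Fin (n + 1), Z ⊔ (C ⊓ H i) ≤ Z := by
    intro i
    induction i using Fin.induction with
    | zero =>
      rw [h0, inf_bot_eq, sup_bot_eq]
    | succ i ih =>
      set A := C ⊓ H i.succ with hA
      set B := C ⊓ H i.castSucc with hB
      have hBZ : B ≤ Z := le_trans le_sup_right ih
      set K := Z ⊔ A with hKdef
      haveI hAnormal : A.Normal := by
        haveI := hnorm i.succ
        exact Subgroup.normal_inf_normal C (H i.succ)
      haveI hKnormal : K.Normal := Subgroup.sup_normal Z A
      have hKC : K ≤ C := sup_le hZC inf_le_left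
      have hZK : Z ≤ K := le_sup_left
      have hdvd : Z.relIndex K ∣ (H i.castSucc).relIndex (H i.succ) := by
        have e1 : Z.relIndex K = Z.relIndex A := by
          rw [hKdef, sup_comm]
          exact Subgroup.relIndex_sup_right A Z
        have e2 : Z.relIndex A ∣ B.relIndex A := Subgroup.relIndex_dvd_of_le_left A hBZ
        have e3 : B.relIndex A = (H i.castSucc).relIndex A := by
          rw [← Subgroup.inf_relIndex_right B A, ← Subgroup.inf_relIndex_right (H i.castSucc) A]
          congr 1
          ext x
          simp only [Subgroup.mem_inf, hB, hA]
          tauto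
        have e4 : (H i.castSucc).relIndex A ∣ (H i.castSucc).relIndex (H i.succ) := by
          haveI := hnorm i.castSucc
          rw [← Subgroup.relIndex_sup_right A (H i.castSucc)]
          exact ⟨(A ⊔ H i.castSucc).relIndex (H i.succ),
            (Subgroup.relIndex_mul_relIndex _ _ _ le_sup_right
              (sup_le inf_le_right (hmono (Fin.castSucc_lt_succ (i := i)).le))).symm⟩
        rw [e1, ← e3] at *
        exact (e2.trans (e3 ▸ e4))
      have hcZ : Nat.card (Z.subgroupOf K) = Nat.card Z :=
        Nat.card_congr (Subgroup.subgroupOfEquivOfLe hZK).toEquiv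
      have hindexrel : (Z.subgroupOf K).index = Z.relIndex K := rfl
      rcases hfac i with hfacπ | hfacπ'
      · -- π-number factor: Schur-Zassenhaus argument
        have htpi : Nat.IsPiNumber π (Z.relIndex K) := isPiNumber_of_dvd hdvd hfacπ
        haveI hZKn : (Z.subgroupOf K).Normal := hZnormal.subgroupOf K
        have hcop : Nat.Coprime (Nat.card (Z.subgroupOf K)) (Z.subgroupOf K).index := by
          rw [hcZ, hindexrel]
          exact (isPiNumber_coprime htpi hcardZ).symm
        obtain ⟨S, hS⟩ := Subgroup.exists_right_complement'_of_coprime hcop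
        have hSZmul := hS.card_mul
        have hcardS : Nat.card S = Z.relIndex K := by
          have h1 : Nat.card (Z.subgroupOf K) * Nat.card S =
              Nat.card (Z.subgroupOf K) * (Z.subgroupOf K).index := by
            rw [hSZmul, Subgroup.card_mul_index]
          exact Nat.eq_of_mul_eq_mul_left Nat.card_pos h1
        have hordS : ∀ s : K, s ∈ S → Nat.IsPiNumber π (orderOf (s : G)) := by
          intro s hsS
          apply isPiNumber_of_dvd _ (hcardS ▸ htpi)
          rw [Subgroup.orderOf_coe s]
          have he : orderOf s = orderOf (⟨s, hsS⟩ : S) := Subgroup.orderOf_coe (⟨s, hsS⟩ : S)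
          rw [he]
          exact orderOf_dvd_natCard _
        have hdecomp : ∀ w : K, Nat.IsPiNumber π (orderOf (w : G)) → w ∈ S := by
          intro w hw
          obtain ⟨⟨zs, s⟩, hzs⟩ := (hS.existsUnique w).exists
          have hzZ : ((zs : K) : G) ∈ Z := zs.2
          have hsK : ((s : K) : G) ∈ C := hKC (s : K).2
          have hcomm : Commute ((zs : K) : G) ((s : K) : G) :=
            hZcentral _ hzZ _ hsK
          have hozpi' : Nat.IsPiNumber πᶜ (orderOf ((zs : K) : G)) := by
            apply isPiNumber_of_dvd _ hcardZ
            have he : orderOf ((zs : K) : G) = orderOf (⟨_, hzZ⟩ : Z) :=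
              Subgroup.orderOf_coe (⟨_, hzZ⟩ : Z)
            rw [he]
            exact orderOf_dvd_natCard _
          have hospi : Nat.IsPiNumber π (orderOf ((s : K) : G)) := hordS _ s.2
          have hcopzs : Nat.Coprime (orderOf ((zs : K) : G)) (orderOf ((s : K) : G)) :=
            (isPiNumber_coprime hospi hozpi').symm
          have hordw : orderOf (w : G) = orderOf ((zs : K) : G) * orderOf ((s : K) : G) := by
            rw [← hzs]
            push_cast
            exact hcomm.orderOf_mul_eq_mul_orderOf_of_coprime hcopzs
          have hoz1 : orderOf ((zs : K) : G) = 1 := by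
            have hdvdw : orderOf ((zs : K) : G) ∣ orderOf (w : G) := by
              rw [hordw]; exact dvd_mul_right _ _
            have h1 : Nat.IsPiNumber π (orderOf ((zs : K) : G)) := isPiNumber_of_dvd hdvdw hw
            have h2 := isPiNumber_coprime h1 hozpi'
            rwa [Nat.Coprime, Nat.gcd_self] at h2
          have hz1 : ((zs : K) : G) = 1 := orderOf_eq_one_iff.mp hoz1
          have hzK1 : (zs : K) = 1 := Subtype.ext hz1
          have hws : w = (s : K) := by rw [← hzs, hzK1, one_mul]
          rw [hws]
          exact s.2
        set W := S.map K.subtype with hW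
        have hWnormal : W.Normal := by
          constructor
          intro w hw g
          rcases Subgroup.mem_map.mp hw with ⟨s, hsS, rfl⟩
          have hgk : g * (K.subtype s) * g⁻¹ ∈ K := by
            have := hKnormal.conj_mem (K.subtype s) s.2 g
            simpa using this
          have hordc : orderOf (g * (K.subtype s) * g⁻¹) = orderOf ((s : G)) := by
            have h6 : orderOf ((MulAut.conj g) ((s : G))) = orderOf ((s : G)) :=
              orderOf_injective (MulAut.conj g).toMonoidHom (MulAut.conj g).injective _
            have h7 : g * (K.subtype s) * g⁻¹ = (MulAut.conj g) ((s : G)) := by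
              rw [MulAut.conj_apply]; rfl
            rw [h7, h6]
          have hmem := hdecomp ⟨_, hgk⟩ (by
            rw [show ((⟨_, hgk⟩ : K) : G) = g * (K.subtype s) * g⁻¹ from rfl, hordc]
            exact hordS s hsS)
          exact Subgroup.mem_map.mpr ⟨⟨_, hgk⟩, hmem, rfl⟩
        have hWcard : Nat.card W = Nat.card S :=
          (Nat.card_congr (Subgroup.equivMapOfInjective S K.subtype K.subtype_injective).toEquiv).symm
        have hWpi : Nat.IsPiNumber π (Nat.card W) := by rw [hWcard, hcardS]; exact htpi
        have hWbot : W = ⊥ := by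
          have h8 := le_Opi hWnormal hWpi
          rw [hbot] at h8
          exact le_bot_iff.mp h8
        have ht1 : Z.relIndex K = 1 := by
          rw [← hcardS, ← hWcard, hWbot, Subgroup.card_bot]
        exact Subgroup.relIndex_eq_one.mp ht1
      · -- π'-number factor
        have hKpi : Nat.IsPiNumber πᶜ (Nat.card K) := by
          have : Nat.card K = Nat.card Z * Z.relIndex K := by
            rw [← hcZ, ← hindexrel, Subgroup.card_mul_index]
          rw [this]
          exact isPiNumber_mul hcardZ (isPiNumber_of_dvd hdvd hfacπ')
        have hKF : K ≤ F := le_Opi hKnormal hKpi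
        exact le_inf hKC hKF
  have hlast := key (Fin.last n)
  rw [htop, inf_top_eq] at hlast
  intro c hc
  exact hZF (hlast (le_sup_right (a := Z) hc))

end HallHigman

/-- Let `G` be `π`-separable with `O_{π'}(G) = 1`. If a `π`-element `g` of `G` induces a
class-preserving automorphism of `N := O_{ππ'}(G)`, then `g ∈ N`. -/
theorem stmt_10 (π : Set ℕ) (G : Type) [Group G] [Finite G] (hsep : IsPiSeparable π G)
    (h1 : Opi πᶜ G = ⊥) (g : G) (hg : Nat.IsPiNumber π (orderOf g))
    (hcp : ∀ x ∈ Opipi' π G, ∃ n ∈ Opipi' π G, g * x * g⁻¹ = n * x * n⁻¹) :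
    g ∈ Opipi' π G := by
  have hsep' : IsPiSeparable π (G ⧸ Opi π G) := isPiSeparable_quotient _ hsep
  have hbot' : Opi π (G ⧸ Opi π G) = ⊥ := Opi_quotient_bot π
  set F := Opi πᶜ (G ⧸ Opi π G) with hF
  have hHH := HallHigman hsep' hbot'
  rw [← hF] at hHH
  set gb := QuotientGroup.mk' (Opi π G) g with hgb
  have hgbord : Nat.IsPiNumber π (orderOf gb) :=
    isPiNumber_of_dvd (orderOf_map_dvd (QuotientGroup.mk' (Opi π G)) g) hg
  have hFnormal : F.Normal := Opi.normal _ _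
  have hcardF : Nat.IsPiNumber πᶜ (Nat.card F) := Opi_isPiNumber
  have hclassb : ∀ y ∈ F, ∃ m ∈ F, gb * y * gb⁻¹ = m * y * m⁻¹ := by
    intro y hy
    obtain ⟨x, hxy⟩ := QuotientGroup.mk'_surjective (Opi π G) y
    have hxN : x ∈ Opipi' π G := by rw [Opipi', Subgroup.mem_comap, hxy]; exact hy
    obtain ⟨nn, hnn, heq⟩ := hcp x hxN
    refine ⟨QuotientGroup.mk' (Opi π G) nn, Subgroup.mem_comap.mp hnn, ?_⟩
    have hthis := congrArg (QuotientGroup.mk' (Opi π G)) heq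
    simp only [map_mul, map_inv] at hthis
    rw [← hxy]
    exact hthis
  have hclass_pow : ∀ (m : ℕ), ∀ y ∈ F, ∃ f ∈ F, gb ^ m * y * (gb ^ m)⁻¹ = f * y * f⁻¹ := by
    intro m
    induction m with
    | zero => intro y hy; exact ⟨1, F.one_mem, by simp⟩
    | succ m ih =>
      intro y hy
      obtain ⟨f, hf, e1⟩ := ih y hy
      obtain ⟨f₀, hf₀, e2⟩ := hclassb (f * y * f⁻¹) (F.mul_mem (F.mul_mem hf hy) (F.inv_mem hf))
      refine ⟨f₀ * f, F.mul_mem hf₀ hf, ?_⟩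
      calc gb ^ (m + 1) * y * (gb ^ (m + 1))⁻¹
          = gb * (gb ^ m * y * (gb ^ m)⁻¹) * gb⁻¹ := by rw [pow_succ']; group
        _ = gb * (f * y * f⁻¹) * gb⁻¹ := by rw [e1]
        _ = f₀ * (f * y * f⁻¹) * f₀⁻¹ := e2
        _ = (f₀ * f) * y * (f₀ * f)⁻¹ := by group
  rw [Opipi', Subgroup.mem_comap]
  refine hHH ?_
  apply mem_of_primePow_pow_mem
  intro p hp hpdvd
  set m := orderOf gb / p ^ (orderOf gb).factorization p with hm
  have hno : orderOf gb ≠ 0 := (orderOf_pos gb).ne'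
  have hordh : orderOf (gb ^ m) = p ^ (orderOf gb).factorization p := by
    rw [orderOf_pow, hm, Nat.gcd_eq_right (Nat.ordCompl_dvd _ _),
      Nat.div_div_self (Nat.ordProj_dvd _ _) hno]
  have hpF : ¬ p ∣ Nat.card F := fun hd => (hcardF p hp hd) (hgbord p hp hpdvd)
  have hcent := centralizes_of_primePow_classPreserving F hFnormal hp (gb ^ m) hordh hpF
    (fun y hy => hclass_pow m y hy)
  exact Subgroup.mem_centralizer_iff.mpr (fun y hy => (hcent y hy).symm)
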